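/- Let L, R be invertible diagonal N×N complex matrices, |e⟩ a column vector, ⟨a|, ⟨b| row vectors, and A, B N×N complex matrices satisfying the rank-one conditions L·A − A·R = |e⟩⟨a| and R·B − B·L = |e⟩⟨b|, and such that 1 − BA is invertible. Set q = ⟨a|(1 − BA)⁻¹R⁻¹|e⟩ and r = −⟨b|L⁻¹(1 − AB)⁻¹|e⟩. Then det(1 − ARBL⁻¹) · det(1 − AR⁻¹BL) = det(1 − AB)² · (1 − q·r). -/

import Mathlib

open Matrix

private lemma mul_vecMulVec' {N : ℕ} (X : Matrix (Fin N) (Fin N) ℂ) (u v : Fin N → ℂ) :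
    X * vecMulVec u v = vecMulVec (X *ᵥ u) v := by
  ext i j
  simp [mul_apply, vecMulVec_apply, mulVec, dotProduct, Finset.sum_mul, mul_assoc]

private lemma vecMulVec_mul' {N : ℕ} (u v : Fin N → ℂ) (X : Matrix (Fin N) (Fin N) ℂ) :
    vecMulVec u v * X = vecMulVec u (v ᵥ* X) := by
  ext i j
  simp only [mul_apply, vecMulVec_apply, vecMul, dotProduct, Finset.mul_sum, mul_assoc]

private lemma vecMul_vecMulVec' {N : ℕ} (u w v : Fin N → ℂ) :
    u ᵥ* vecMulVec w v = (u ⬝ᵥ w) • v := by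
  ext j
  simp [vecMul, dotProduct, vecMulVec_apply, Finset.sum_mul, mul_assoc]

private lemma sandwich_vecMulVec {N : ℕ} (u w v x : Fin N → ℂ) :
    u ᵥ* vecMulVec w v ⬝ᵥ x = (u ⬝ᵥ w) * (v ⬝ᵥ x) := by
  rw [vecMul_vecMulVec', smul_dotProduct, smul_eq_mul]

private lemma sandwich_sub {N : ℕ} (u x : Fin N → ℂ) (X Y : Matrix (Fin N) (Fin N) ℂ) :
    u ᵥ* (X - Y) ⬝ᵥ x = u ᵥ* X ⬝ᵥ x - u ᵥ* Y ⬝ᵥ x := by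
  rw [Matrix.vecMul_sub, sub_dotProduct]

private lemma det_add_vecMulVec' {N : ℕ} (P : Matrix (Fin N) (Fin N) ℂ)
    (hP : IsUnit P.det) (u v : Fin N → ℂ) :
    (P + vecMulVec u v).det = P.det * (1 + v ᵥ* P⁻¹ ⬝ᵥ u) := by
  rw [vecMulVec_eq Unit, Matrix.det_add_replicateCol_mul_replicateRow hP]
  congr 1
  rw [det_unique]
  simp [mul_apply, vecMul, dotProduct, row, col, Finset.sum_mul, Finset.mul_sum, mul_assoc]

theorem stmt16 (N : ℕ) (L R A B : Matrix (Fin N) (Fin N) ℂ) (e a b : Fin N → ℂ)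
    (hLd : L.IsDiag) (hRd : R.IsDiag) (hL : IsUnit L) (hR : IsUnit R)
    (hA : L * A - A * R = vecMulVec e a)
    (hB : R * B - B * L = vecMulVec e b)
    (hBA : IsUnit (1 - B * A)) :
    let q : ℂ := a ᵥ* ((1 - B * A)⁻¹ * R⁻¹) ⬝ᵥ e
    let r : ℂ := -(b ᵥ* (L⁻¹ * (1 - A * B)⁻¹) ⬝ᵥ e)
    (1 - A * R * B * L⁻¹).det * (1 - A * R⁻¹ * B * L).det
      = (1 - A * B).det ^ 2 * (1 - q * r) := by
  intro q r
  have hq : q = a ᵥ* ((1 - B * A)⁻¹ * R⁻¹) ⬝ᵥ e := rfl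
  have hr : r = -(b ᵥ* (L⁻¹ * (1 - A * B)⁻¹) ⬝ᵥ e) := rfl
  set E : Matrix (Fin N) (Fin N) ℂ := vecMulVec e a with hE
  set F : Matrix (Fin N) (Fin N) ℂ := vecMulVec e b with hF
  set P : Matrix (Fin N) (Fin N) ℂ := 1 - A * B with hP
  set Q : Matrix (Fin N) (Fin N) ℂ := (1 - B * A)⁻¹ with hQ
  -- invertibility facts
  have hLdet : IsUnit L.det := (isUnit_iff_isUnit_det L).mp hL
  have hRdet : IsUnit R.det := (isUnit_iff_isUnit_det R).mp hR
  have hBAdet : IsUnit (1 - B * A).det := (isUnit_iff_isUnit_det _).mp hBA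
  have hPdet : IsUnit P.det := by
    rw [hP, det_one_sub_mul_comm]; exact hBAdet
  have hL1 : L * L⁻¹ = 1 := mul_nonsing_inv L hLdet
  have hL2 : L⁻¹ * L = 1 := nonsing_inv_mul L hLdet
  have hR1 : R * R⁻¹ = 1 := mul_nonsing_inv R hRdet
  have hR2 : R⁻¹ * R = 1 := nonsing_inv_mul R hRdet
  have hP1 : P * P⁻¹ = 1 := mul_nonsing_inv P hPdet
  have hQ1 : (1 - B * A) * Q = 1 := mul_nonsing_inv _ hBAdet
  have hQ2 : Q * (1 - B * A) = 1 := nonsing_inv_mul _ hBAdet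
  -- relation rearrangements
  have hAR : A * R = L * A - E := by rw [← hA]; abel
  have hLA : L * A = A * R + E := by rw [← hA]; abel
  -- m1 : B * P⁻¹ = Q * B
  have m1 : B * P⁻¹ = Q * B := by
    have comm : (1 - B * A) * B = B * P := by rw [hP]; noncomm_ring
    calc B * P⁻¹ = (Q * (1 - B * A)) * (B * P⁻¹) := by rw [hQ2, Matrix.one_mul]
      _ = Q * (((1 - B * A) * B) * P⁻¹) := by simp only [Matrix.mul_assoc]
      _ = Q * ((B * P) * P⁻¹) := by rw [comm]
      _ = Q * B := by rw [Matrix.mul_assoc B P, hP1, Matrix.mul_one]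
  -- m2 : P⁻¹ = 1 + A * Q * B
  have m2 : P⁻¹ = 1 + A * Q * B := by
    refine inv_eq_right_inv ?_
    have expand : P * (1 + A * Q * B) = 1 - A * B + A * ((1 - B * A) * Q) * B := by
      rw [hP]; noncomm_ring
    rw [expand, hQ1]
    noncomm_ring
  -- m3 : L⁻¹ * A = A * R⁻¹ - L⁻¹ * E * R⁻¹
  have m3 : L⁻¹ * A = A * R⁻¹ - L⁻¹ * E * R⁻¹ := by
    calc L⁻¹ * A = L⁻¹ * (A * (R * R⁻¹)) := by rw [hR1, Matrix.mul_one]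
      _ = L⁻¹ * ((A * R) * R⁻¹) := by rw [Matrix.mul_assoc]
      _ = L⁻¹ * ((L * A - E) * R⁻¹) := by rw [hAR]
      _ = (L⁻¹ * L) * (A * R⁻¹) - L⁻¹ * E * R⁻¹ := by noncomm_ring
      _ = A * R⁻¹ - L⁻¹ * E * R⁻¹ := by rw [hL2, Matrix.one_mul]
  -- m4 : Q * (B * A) = Q - 1
  have m4 : Q * (B * A) = Q - 1 := by
    calc Q * (B * A) = Q - Q * (1 - B * A) := by noncomm_ring
      _ = Q - 1 := by rw [hQ2]
  -- determinant of the first factor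
  have f1 : (1 - A * R * B * L⁻¹).det
      = P.det * (1 + (a ᵥ* B) ᵥ* P⁻¹ ⬝ᵥ (L⁻¹ *ᵥ e)) := by
    have assoc : 1 - A * R * B * L⁻¹ = 1 - (A * R * B) * L⁻¹ := by noncomm_ring
    rw [assoc, det_one_sub_mul_comm]
    have rank1 : L⁻¹ * E * B = vecMulVec (L⁻¹ *ᵥ e) (a ᵥ* B) := by
      rw [hE, mul_vecMulVec', vecMulVec_mul']
    have key : 1 - L⁻¹ * (A * R * B) = P + vecMulVec (L⁻¹ *ᵥ e) (a ᵥ* B) := by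
      calc 1 - L⁻¹ * (A * R * B) = 1 - L⁻¹ * ((L * A - E) * B) := by
            rw [show A * R * B = (L * A - E) * B from by rw [← hAR]]
        _ = 1 - (L⁻¹ * L) * (A * B) + L⁻¹ * E * B := by noncomm_ring
        _ = P + L⁻¹ * E * B := by rw [hL2, hP]; noncomm_ring
        _ = P + vecMulVec (L⁻¹ *ᵥ e) (a ᵥ* B) := by rw [rank1]
    rw [key, det_add_vecMulVec' P hPdet]
  -- determinant of the second factor
  have f2 : (1 - A * R⁻¹ * B * L).det
      = P.det * (1 + (-(a ᵥ* (R⁻¹ * B))) ᵥ* P⁻¹ ⬝ᵥ e) := by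
    have assoc : 1 - A * R⁻¹ * B * L = 1 - (A * R⁻¹ * B) * L := by noncomm_ring
    rw [assoc, det_one_sub_mul_comm]
    have rank1 : E * (R⁻¹ * B) = vecMulVec e (a ᵥ* (R⁻¹ * B)) := by
      rw [hE, vecMulVec_mul']
    have negv : vecMulVec e (-(a ᵥ* (R⁻¹ * B))) = -vecMulVec e (a ᵥ* (R⁻¹ * B)) := by
      ext i j; simp [vecMulVec_apply]
    have key : 1 - L * (A * R⁻¹ * B) = P + vecMulVec e (-(a ᵥ* (R⁻¹ * B))) := by
      calc 1 - L * (A * R⁻¹ * B) = 1 - (L * A) * (R⁻¹ * B) := by noncomm_ring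
        _ = 1 - (A * R + E) * (R⁻¹ * B) := by rw [hLA]
        _ = 1 - A * (R * R⁻¹) * B - E * (R⁻¹ * B) := by noncomm_ring
        _ = P - E * (R⁻¹ * B) := by rw [hR1, hP]; noncomm_ring
        _ = P + vecMulVec e (-(a ᵥ* (R⁻¹ * B))) := by rw [negv, rank1]; noncomm_ring
    rw [key, det_add_vecMulVec' P hPdet]
  -- scalar abbreviations
  set sval : ℂ := b ᵥ* (L⁻¹ * P⁻¹) ⬝ᵥ e with hsval
  set av : ℂ := a ᵥ* (Q * B * L⁻¹) ⬝ᵥ e with hav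
  set dv : ℂ := a ᵥ* (R⁻¹ * (Q * B)) ⬝ᵥ e with hdv
  -- the key matrix identity
  have BIG : Q * R⁻¹ * F * (L⁻¹ * P⁻¹)
      = Q * B * L⁻¹ - R⁻¹ * (Q * B) - Q * B * L⁻¹ * E * (R⁻¹ * (Q * B)) := by
    calc Q * R⁻¹ * F * (L⁻¹ * P⁻¹)
        = Q * R⁻¹ * (R * B - B * L) * (L⁻¹ * P⁻¹) := by rw [hB]
      _ = Q * (R⁻¹ * R) * (B * (L⁻¹ * P⁻¹)) - Q * R⁻¹ * (B * ((L * L⁻¹) * P⁻¹)) := by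
          noncomm_ring
      _ = Q * (B * (L⁻¹ * P⁻¹)) - Q * R⁻¹ * (B * P⁻¹) := by
          rw [hR2, hL1]; noncomm_ring
      _ = Q * (B * (L⁻¹ * P⁻¹)) - Q * R⁻¹ * (Q * B) := by rw [m1]
      _ = Q * B * L⁻¹ + Q * B * (L⁻¹ * A) * (Q * B) - Q * R⁻¹ * (Q * B) := by
          rw [m2]; noncomm_ring
      _ = Q * B * L⁻¹ + Q * B * (A * R⁻¹) * (Q * B) - Q * B * L⁻¹ * E * (R⁻¹ * (Q * B))
            - Q * R⁻¹ * (Q * B) := by rw [m3]; noncomm_ring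
      _ = Q * B * L⁻¹ + (Q * (B * A)) * (R⁻¹ * (Q * B)) - Q * B * L⁻¹ * E * (R⁻¹ * (Q * B))
            - Q * R⁻¹ * (Q * B) := by noncomm_ring
      _ = Q * B * L⁻¹ + (Q - 1) * (R⁻¹ * (Q * B)) - Q * B * L⁻¹ * E * (R⁻¹ * (Q * B))
            - Q * R⁻¹ * (Q * B) := by rw [m4]
      _ = Q * B * L⁻¹ - R⁻¹ * (Q * B) - Q * B * L⁻¹ * E * (R⁻¹ * (Q * B)) := by noncomm_ring
  -- sandwich of the rank-one term
  have sand_rank : a ᵥ* (Q * B * L⁻¹ * E * (R⁻¹ * (Q * B))) ⬝ᵥ e = av * dv := by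
    rw [hE, show Q * B * L⁻¹ * vecMulVec e a * (R⁻¹ * (Q * B))
        = vecMulVec ((Q * B * L⁻¹) *ᵥ e) (a ᵥ* (R⁻¹ * (Q * B))) from by
      rw [mul_vecMulVec', vecMulVec_mul']]
    rw [sandwich_vecMulVec, dotProduct_mulVec, hav, hdv]
  -- q * sval = av - dv - av * dv
  have qs_eq : q * sval = av - dv - av * dv := by
    have c0 : q * sval = a ᵥ* (Q * R⁻¹ * F * (L⁻¹ * P⁻¹)) ⬝ᵥ e := by
      rw [show Q * R⁻¹ * F * (L⁻¹ * P⁻¹)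
          = vecMulVec ((Q * R⁻¹) *ᵥ e) (b ᵥ* (L⁻¹ * P⁻¹)) from by
        rw [hF, mul_vecMulVec', vecMulVec_mul']]
      rw [sandwich_vecMulVec, dotProduct_mulVec, hq, hsval]
    rw [c0, BIG, sandwich_sub, sandwich_sub, sand_rank, hav, hdv]
  -- normalize the two determinant scalars
  have n1 : (a ᵥ* B) ᵥ* P⁻¹ ⬝ᵥ (L⁻¹ *ᵥ e) = av := by
    rw [vecMul_vecMul, dotProduct_mulVec, vecMul_vecMul, m1, hav]
  have n2 : (-(a ᵥ* (R⁻¹ * B))) ᵥ* P⁻¹ ⬝ᵥ e = -dv := by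
    rw [Matrix.neg_vecMul, neg_dotProduct, vecMul_vecMul, Matrix.mul_assoc, m1, hdv]
  -- final assembly
  have hr' : r = -sval := by rw [hr, hsval]
  rw [f1, f2, n1, n2, hr']
  rw [show (1 : ℂ) - q * -sval = 1 + q * sval from by ring, qs_eq]
  ring
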